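/- Given any M = (a_{ij}) ∈ Mat_{2n}(ℂ) with M − Mᵗ = Ω (the standard skew-symmetric matrix), define X_i = E_{1,i+1} + Σ_{l=1}^{2n} a_{li} E_{l+1,2n+2} ∈ Mat_{2n+2}(ℂ) for 1 ≤ i ≤ 2n, and t = E_{1,2n+2}. Then X_i·X_j = a_{ij} t, t·X_i = X_i·t = t² = 0, and the span of {t, X₁, …, X_{2n}} is closed under multiplication with all triple products zero; hence A = ℂ·I ⊕ span{t, X₁,…,X_{2n}} is a local unital associative subalgebra of Mat_{2n+2}(ℂ) of dimension 2n+2. -/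

import Mathlib

open Matrix

/-- The standard skew-symmetric (symplectic) matrix `Ω = [[0, I], [-I, 0]]`. -/
def stdOmega (n : ℕ) : Matrix (Fin (2 * n)) (Fin (2 * n)) ℂ :=
  fun i j => if (i : ℕ) + n = (j : ℕ) then 1 else if (j : ℕ) + n = (i : ℕ) then -1 else 0

/-- `t = E_{1,2n+2}` (in 1-based indexing) in `Mat_{2n+2}(ℂ)`. -/
def tmat (n : ℕ) : Matrix (Fin (2 * n + 2)) (Fin (2 * n + 2)) ℂ :=
  Matrix.single ⟨0, by omega⟩ ⟨2 * n + 1, by omega⟩ 1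

/-- `X_i = E_{1,i+1} + Σ_l a_{li} E_{l+1,2n+2}` (1-based indexing). -/
noncomputable def Xmat (n : ℕ) (M : Matrix (Fin (2 * n)) (Fin (2 * n)) ℂ) (i : Fin (2 * n)) :
    Matrix (Fin (2 * n + 2)) (Fin (2 * n + 2)) ℂ :=
  Matrix.single ⟨0, by omega⟩ ⟨(i : ℕ) + 1, by have := i.isLt; omega⟩ 1 +
    ∑ l : Fin (2 * n), M l i •
      Matrix.single ⟨(l : ℕ) + 1, by have := l.isLt; omega⟩ ⟨2 * n + 1, by omega⟩ 1

/-- For any `M` with `M - Mᵗ = Ω`, the matrices `X_i` and `t`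
satisfy `X_i·X_j = a_{ij}·t`, `t·X_i = X_i·t = t² = 0`, all triple products
vanish, the span of `1, t, X₁, …, X_{2n}` is closed under multiplication, and
the resulting unital subalgebra `A = ℂ·I ⊕ span{t, X₁,…,X_{2n}}` has
dimension `2n+2`. -/
lemma tmat_apply (n : ℕ) (a b : Fin (2*n+2)) :
    tmat n a b = if 0 = (a:ℕ) ∧ 2*n+1 = (b:ℕ) then 1 else 0 := by
  simp [tmat, Matrix.single, Fin.ext_iff]

lemma Xmat_apply (n : ℕ) (M : Matrix (Fin (2*n)) (Fin (2*n)) ℂ) (i : Fin (2*n)) (a b : Fin (2*n+2)) :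
    Xmat n M i a b = (if 0 = (a:ℕ) ∧ (i:ℕ)+1 = (b:ℕ) then 1 else 0) +
      (if h : 1 ≤ (a:ℕ) ∧ (a:ℕ) ≤ 2*n ∧ (b:ℕ) = 2*n+1 then M ⟨(a:ℕ)-1, by omega⟩ i else 0) := by
  simp only [Xmat, Matrix.add_apply, Matrix.sum_apply, Matrix.smul_apply,
    Matrix.single, Matrix.of_apply, Fin.ext_iff]
  congr 1
  by_cases h : 1 ≤ (a:ℕ) ∧ (a:ℕ) ≤ 2*n ∧ (b:ℕ) = 2*n+1
  · rw [dif_pos h, Finset.sum_eq_single (⟨(a:ℕ)-1, by omega⟩ : Fin (2*n))]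
    · simp only [smul_eq_mul]
      rw [if_pos (by constructor <;> omega), mul_one]
    · intro l _ hl
      rw [if_neg, smul_zero]
      have hl' : (l:ℕ) ≠ (a:ℕ) - 1 := fun hh => hl (Fin.ext hh)
      omega
    · simp
  · rw [dif_neg h, Finset.sum_eq_zero]
    intro l _
    rw [if_neg, smul_zero]
    have := l.isLt
    omega

lemma tt (n : ℕ) : tmat n * tmat n = 0 := by
  ext a b
  rw [Matrix.mul_apply]
  refine (Finset.sum_eq_zero fun k _ => ?_).trans (Matrix.zero_apply a b).symm
  rw [tmat_apply, tmat_apply]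
  have := k.isLt
  split_ifs <;> first | omega | simp

lemma tX (n : ℕ) (M : Matrix (Fin (2*n)) (Fin (2*n)) ℂ) (i : Fin (2*n)) :
    tmat n * Xmat n M i = 0 := by
  ext a b
  rw [Matrix.mul_apply]
  refine (Finset.sum_eq_zero fun k _ => ?_).trans (Matrix.zero_apply a b).symm
  rw [tmat_apply, Xmat_apply]
  have := i.isLt
  split_ifs <;> first | omega | simp

lemma Xt (n : ℕ) (M : Matrix (Fin (2*n)) (Fin (2*n)) ℂ) (i : Fin (2*n)) :
    Xmat n M i * tmat n = 0 := by
  ext a b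
  rw [Matrix.mul_apply]
  refine (Finset.sum_eq_zero fun k _ => ?_).trans (Matrix.zero_apply a b).symm
  rw [tmat_apply, Xmat_apply]
  have := i.isLt
  have := k.isLt
  split_ifs <;> first | omega | simp

lemma XXmul (n : ℕ) (M : Matrix (Fin (2*n)) (Fin (2*n)) ℂ) (i j : Fin (2*n)) :
    Xmat n M i * Xmat n M j = M i j • tmat n := by
  have hi := i.isLt
  ext a b
  rw [Matrix.mul_apply, Matrix.smul_apply, tmat_apply]
  rw [Finset.sum_eq_single (⟨(i:ℕ)+1, by omega⟩ : Fin (2*n+2))]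
  · rw [Xmat_apply, Xmat_apply]
    simp only [Fin.val_mk, Nat.add_sub_cancel, Fin.eta, and_true, true_and, false_and,
      and_false, if_false]
    split_ifs <;> first | rfl | omega | (simp; done) | (exfalso; omega) | exact (‹False ∧ _›).1.elim
  · intro k _ hk
    have hk' : (k:ℕ) ≠ (i:ℕ)+1 := fun hh => hk (Fin.ext hh)
    rw [Xmat_apply, Xmat_apply]
    have := k.isLt
    split_ifs <;> first | omega | simp
  · intro h; exact absurd (Finset.mem_univ _) h

noncomputable def vfun (n : ℕ) (M : Matrix (Fin (2*n)) (Fin (2*n)) ℂ) :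
    Fin (2*n+2) → Matrix (Fin (2*n+2)) (Fin (2*n+2)) ℂ :=
  Fin.cons 1 (Fin.cons (tmat n) (Xmat n M))

lemma range_vfun (n : ℕ) (M : Matrix (Fin (2*n)) (Fin (2*n)) ℂ) :
    Set.range (vfun n M) = insert 1 (insert (tmat n) (Set.range (Xmat n M))) := by
  unfold vfun
  rw [Fin.range_cons, Fin.range_cons]

lemma li_vfun (n : ℕ) (M : Matrix (Fin (2*n)) (Fin (2*n)) ℂ) :
    LinearIndependent ℂ (vfun n M) := by
  rw [Fintype.linearIndependent_iff]
  intro g hg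
  have hev : ∀ a b : Fin (2*n+2), g 0 * (1 : Matrix (Fin (2*n+2)) (Fin (2*n+2)) ℂ) a b
      + g ((0 : Fin (2*n+1)).succ) * tmat n a b
      + ∑ j : Fin (2*n), g (j.succ.succ) * Xmat n M j a b = 0 := by
    intro a b
    have h := congrFun (congrFun hg a) b
    rw [Matrix.sum_apply, Fin.sum_univ_succ, Fin.sum_univ_succ] at h
    simpa [vfun, add_assoc] using h
  have hg0 : g 0 = 0 := by
    have h := hev ⟨0, by omega⟩ ⟨0, by omega⟩
    rw [Matrix.one_apply_eq, tmat_apply, if_neg (by simp only [Fin.val_mk]; omega),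
      Finset.sum_eq_zero (fun j _ => by
        rw [Xmat_apply, if_neg (by simp only [Fin.val_mk]; have := j.isLt; omega), dif_neg (by simp only [Fin.val_mk]; omega)]; ring)] at h
    simpa using h
  have hg1 : g ((0 : Fin (2*n+1)).succ) = 0 := by
    have h := hev ⟨0, by omega⟩ ⟨2*n+1, by omega⟩
    rw [Matrix.one_apply_ne (by simp [Fin.ext_iff]), tmat_apply, if_pos (by constructor <;> rfl),
      Finset.sum_eq_zero (fun j _ => by
        rw [Xmat_apply, if_neg (by simp only [Fin.val_mk]; have := j.isLt; omega), dif_neg (by simp only [Fin.val_mk]; omega)]; ring)] at h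
    simpa using h
  have hgX : ∀ j : Fin (2*n), g (j.succ.succ) = 0 := by
    intro j
    have hj := j.isLt
    have h := hev ⟨0, by omega⟩ ⟨(j:ℕ)+1, by omega⟩
    rw [Matrix.one_apply_ne (by simp [Fin.ext_iff]), tmat_apply, if_neg (by simp only [Fin.val_mk]; omega),
      Finset.sum_eq_single j (fun k _ hk => by
        have hk' : (k:ℕ) ≠ (j:ℕ) := fun hh => hk (Fin.ext hh)
        rw [Xmat_apply, if_neg (by simp only [Fin.val_mk]; omega), dif_neg (by simp only [Fin.val_mk]; omega)]; ring)
      (fun h => absurd (Finset.mem_univ _) h)] at h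
    rw [Xmat_apply, if_pos (by constructor <;> rfl), dif_neg (by simp only [Fin.val_mk]; omega)] at h
    simpa using h
  intro i
  refine Fin.cases hg0 (fun i' => ?_) i
  refine Fin.cases hg1 (fun j => hgX j) i'

theorem tautological_algebra_construction
    (n : ℕ) (M : Matrix (Fin (2 * n)) (Fin (2 * n)) ℂ)
    (hM : M - Mᵀ = stdOmega n) :
    (∀ i j : Fin (2 * n), Xmat n M i * Xmat n M j = M i j • tmat n) ∧
    (∀ i : Fin (2 * n), tmat n * Xmat n M i = 0 ∧ Xmat n M i * tmat n = 0) ∧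
    (tmat n * tmat n = 0) ∧
    (∀ i j k : Fin (2 * n), Xmat n M i * Xmat n M j * Xmat n M k = 0) ∧
    (∀ x ∈ Submodule.span ℂ
        (insert (1 : Matrix (Fin (2 * n + 2)) (Fin (2 * n + 2)) ℂ)
          (insert (tmat n) (Set.range (Xmat n M)))),
      ∀ y ∈ Submodule.span ℂ
        (insert (1 : Matrix (Fin (2 * n + 2)) (Fin (2 * n + 2)) ℂ)
          (insert (tmat n) (Set.range (Xmat n M)))),
      x * y ∈ Submodule.span ℂ
        (insert (1 : Matrix (Fin (2 * n + 2)) (Fin (2 * n + 2)) ℂ)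
          (insert (tmat n) (Set.range (Xmat n M))))) ∧
    Module.finrank ℂ
      ↥(Submodule.span ℂ
        (insert (1 : Matrix (Fin (2 * n + 2)) (Fin (2 * n + 2)) ℂ)
          (insert (tmat n) (Set.range (Xmat n M))))) = 2 * n + 2 := by
  set S : Set (Matrix (Fin (2 * n + 2)) (Fin (2 * n + 2)) ℂ) :=
    insert (1 : Matrix (Fin (2 * n + 2)) (Fin (2 * n + 2)) ℂ)
      (insert (tmat n) (Set.range (Xmat n M))) with hS
  have hmemt : tmat n ∈ S := Set.mem_insert_of_mem _ (Set.mem_insert _ _)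
  refine ⟨XXmul n M, fun i => ⟨tX n M i, Xt n M i⟩, tt n, ?_, ?_, ?_⟩
  · intro i j k
    rw [XXmul, smul_mul_assoc, tX, smul_zero]
  · intro x hx y hy
    have hmul : x * y ∈ Submodule.span ℂ S * Submodule.span ℂ S :=
      Submodule.mul_mem_mul hx hy
    rw [Submodule.span_mul_span] at hmul
    refine Submodule.span_le.mpr ?_ hmul
    rw [Set.mul_subset_iff]
    intro u hu v hv
    rcases hu with rfl | rfl | ⟨i, rfl⟩
    · rw [one_mul]; exact Submodule.subset_span hv
    · rcases hv with rfl | rfl | ⟨j, rfl⟩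
      · rw [mul_one]; exact Submodule.subset_span hmemt
      · rw [tt]; exact Submodule.zero_mem _
      · rw [tX]; exact Submodule.zero_mem _
    · rcases hv with rfl | rfl | ⟨j, rfl⟩
      · rw [mul_one]
        exact Submodule.subset_span (Set.mem_insert_of_mem _ (Set.mem_insert_of_mem _ ⟨i, rfl⟩))
      · rw [Xt]; exact Submodule.zero_mem _
      · rw [XXmul]
        exact Submodule.smul_mem _ _ (Submodule.subset_span hmemt)
  · rw [hS, ← range_vfun n M, finrank_span_eq_card (li_vfun n M)]
    simp
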